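/- Let G be an infinite connected amenable graph of bounded degree with partial self-isomorphisms, and suppose C₁/(log n)^α ≤ Λ(n) ≤ C₂/(log n)^β for constants C₁, C₂, α, β > 0 and all n ≥ 2. Then there is a constant K₁ > 0 such that for infinitely many integers N, Sep(N)/N ≥ K₁·Λ(N)/(log N)^{α/β}. -/

import Mathlib

open Set Filter

namespace SepProfile

variable {V : Type*}

/-- Edge boundary of a vertex set: pairs (a,b) with a ∈ A, b ∉ A, a ~ b. -/
def ebd (G : SimpleGraph V) (A : Set V) : Set (V × V) :=
  {p | G.Adj p.1 p.2 ∧ p.1 ∈ A ∧ p.2 ∉ A}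

/-- Isoperimetric ratio |∂A|/|A|. -/
noncomputable def ratio (G : SimpleGraph V) (A : Set V) : ℝ :=
  ((ebd G A).ncard : ℝ) / (A.ncard : ℝ)

/-- Isoperimetric profile Λ(n). -/
noncomputable def isop (G : SimpleGraph V) (n : ℕ) : ℝ :=
  sInf {x | ∃ A : Set V, A.Finite ∧ A.Nonempty ∧ A.ncard ≤ n ∧ x = ratio G A}

/-- Boundary of A within F (edges of the induced subgraph on F leaving A). -/
def inbd (G : SimpleGraph V) (F A : Set V) : Set (V × V) :=
  {p | G.Adj p.1 p.2 ∧ p.1 ∈ A ∧ p.2 ∈ F \ A}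

/-- Cheeger constant of the subgraph induced on F. -/
noncomputable def cheeger (G : SimpleGraph V) (F : Set V) : ℝ :=
  sInf {x | ∃ A : Set V, A ⊆ F ∧ A.Nonempty ∧ 2 * A.ncard ≤ F.ncard ∧
    x = ((inbd G F A).ncard : ℝ) / (A.ncard : ℝ)}

/-- Separation profile Sep(n) = sup_{|F| ≤ n} |F|·h(F). -/
noncomputable def sep (G : SimpleGraph V) (n : ℕ) : ℝ :=
  sSup {x | ∃ F : Set V, F.Finite ∧ F.ncard ≤ n ∧ x = (F.ncard : ℝ) * cheeger G F}

/-- A finite set is optimal if it realizes the isoperimetric profile. -/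
def Optimal (G : SimpleGraph V) (F : Set V) : Prop :=
  F.Finite ∧ F.Nonempty ∧ ratio G F = isop G F.ncard

/-- An integer is optimal if some optimal set has that cardinality. -/
def OptimalInt (G : SimpleGraph V) (n : ℕ) : Prop :=
  ∃ F : Set V, Optimal G F ∧ F.ncard = n

/-- Ball of radius n around v for the graph metric. -/
def ball (G : SimpleGraph V) (v : V) (n : ℕ) : Set V :=
  {u | G.Reachable v u ∧ G.dist v u ≤ n}

/-- All degrees bounded by D. -/
def DegLE (G : SimpleGraph V) (D : ℕ) : Prop :=
  ∀ v, (G.neighborSet v).ncard ≤ D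

/-- Amenability: the isoperimetric profile tends to 0. -/
def Amenable (G : SimpleGraph V) : Prop :=
  Tendsto (fun n => isop G n) atTop (nhds 0)

/-- F together with its outer vertex neighbourhood. -/
def nbh (G : SimpleGraph V) (F : Set V) : Set V :=
  F ∪ {b | ∃ a ∈ F, G.Adj a b}

/-- Partial self-isomorphisms: every finite F has a disjoint isomorphic copy
(together with its boundary neighbourhood). -/
def HasPSI (G : SimpleGraph V) : Prop :=
  ∀ F : Set V, F.Finite →
    ∃ F' : Set V, F'.Finite ∧ Disjoint F F' ∧
      ∃ e : G.induce (nbh G F) ≃g G.induce (nbh G F'),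
        ∀ x : nbh G F, (x : V) ∈ F ↔ ((e x : V) ∈ F')

/-- δ-geometric decay function p_f^δ(x) = inf {y > 0 : f(y) ≤ δ·f(x)}. -/
noncomputable def gdecay (f : ℝ → ℝ) (δ x : ℝ) : ℝ :=
  sInf {y | 0 < y ∧ f y ≤ δ * f x}

end SepProfile

open SepProfile Real

namespace SepProfile

variable {V : Type*} (G : SimpleGraph V)

lemma ratio_nonneg (A : Set V) : 0 ≤ ratio G A :=
  div_nonneg (by positivity) (by positivity)

lemma isopSet_bddBelow (n : ℕ) :
    BddBelow {x | ∃ A : Set V, A.Finite ∧ A.Nonempty ∧ A.ncard ≤ n ∧ x = ratio G A} :=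
  ⟨0, by rintro x ⟨A, -, -, -, rfl⟩; exact ratio_nonneg G A⟩

lemma isop_le {A : Set V} (hA : A.Finite) (hne : A.Nonempty) {n : ℕ} (h : A.ncard ≤ n) :
    isop G n ≤ ratio G A :=
  csInf_le (isopSet_bddBelow G n) ⟨A, hA, hne, h, rfl⟩

lemma isop_nonneg (n : ℕ) : 0 ≤ isop G n :=
  Real.sInf_nonneg (by rintro x ⟨A, -, -, -, rfl⟩; exact ratio_nonneg G A)

lemma isop_anti [Nonempty V] {k l : ℕ} (hk : 1 ≤ k) (hkl : k ≤ l) :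
    isop G l ≤ isop G k := by
  obtain ⟨v⟩ := ‹Nonempty V›
  refine csInf_le_csInf (isopSet_bddBelow G l) ?_ ?_
  · exact ⟨ratio G {v}, {v}, Set.finite_singleton v, Set.singleton_nonempty v,
      by simpa using hk, rfl⟩
  · rintro x ⟨A, h1, h2, h3, h4⟩
    exact ⟨A, h1, h2, h3.trans hkl, h4⟩

lemma ebd_singleton (v : V) : ebd G {v} = (fun b => (v, b)) '' G.neighborSet v := by
  ext ⟨x, y⟩
  simp only [ebd, Set.mem_setOf_eq, Set.mem_image, SimpleGraph.mem_neighborSet]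
  constructor
  · rintro ⟨hadj, hx, hy⟩
    rcases hx with rfl
    exact ⟨y, hadj, rfl⟩
  · rintro ⟨b, hb, heq⟩
    cases heq
    exact ⟨hb, rfl, fun h => by rcases h with rfl; exact G.irrefl hb⟩

end SepProfile
open SepProfile Real

theorem stmt11 {V : Type*} [Infinite V] (G : SimpleGraph V) (hconn : G.Connected)
    (D : ℕ) (hdeg : DegLE G D) (hamen : Amenable G) (hPSI : HasPSI G)
    (C₁ C₂ α β : ℝ) (hC₁ : 0 < C₁) (hC₂ : 0 < C₂) (hα : 0 < α) (hβ : 0 < β)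
    (hiso : ∀ n : ℕ, 2 ≤ n →
      C₁ / (Real.log n) ^ α ≤ isop G n ∧ isop G n ≤ C₂ / (Real.log n) ^ β) :
    ∃ K > (0:ℝ), ∀ N₀ : ℕ, ∃ N : ℕ, N₀ ≤ N ∧
      K * isop G N / (Real.log N) ^ (α / β) ≤ sep G N / (N : ℝ) := by
  classical
  have hNV : Nonempty V := inferInstance
  have hlog2 : 0 < Real.log 2 := Real.log_pos one_lt_two
  -- positivity of isop
  have hisop_pos : ∀ n : ℕ, 2 ≤ n → 0 < isop G n := by
    intro n hn
    have h1 : (1:ℝ) < (n:ℝ) := by exact_mod_cast Nat.lt_of_lt_of_le one_lt_two hn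
    have hlogn : 0 < Real.log n := Real.log_pos h1
    exact lt_of_lt_of_le (div_pos hC₁ (Real.rpow_pos_of_pos hlogn α)) (hiso n hn).1
  -- edge boundaries of finite nonempty sets are finite and nonempty
  have hebd : ∀ A : Set V, A.Finite → A.Nonempty →
      (ebd G A).Finite ∧ 1 ≤ (ebd G A).ncard := by
    intro A hA hne
    have h1 : 0 < ratio G A := by
      have h2 : 0 < isop G (max 2 A.ncard) := hisop_pos _ (le_max_left _ _)
      exact h2.trans_le (isop_le G hA hne (le_max_right _ _))
    have h4 : (ebd G A).ncard ≠ 0 := by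
      intro h
      rw [ratio, h] at h1
      simp at h1
    refine ⟨?_, Nat.one_le_iff_ne_zero.2 h4⟩
    by_contra h
    exact h4 (Set.Infinite.ncard h)
  -- neighbor sets are finite with at most D elements
  have hnb : ∀ v : V, (G.neighborSet v).Finite ∧ (G.neighborSet v).ncard ≤ D := by
    intro v
    have h1 := (hebd {v} (Set.finite_singleton v) (Set.singleton_nonempty v)).1
    rw [ebd_singleton] at h1
    have hinj : Function.Injective (fun b : V => (v, b)) := by
      intro x y h; simpa using congrArg Prod.snd h
    exact ⟨Set.Finite.of_finite_image h1 hinj.injOn, hdeg v⟩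
  -- cardinality of {a} ×ˢ s
  have hprodcard : ∀ (a : V) (s : Set V), (({a} : Set V) ×ˢ s).ncard = s.ncard := by
    intro a s
    have : ({a} : Set V) ×ˢ s = (fun b : V => (a, b)) '' s := by
      ext ⟨x, y⟩
      simp only [Set.mem_prod, Set.mem_singleton_iff, Set.mem_image]
      constructor
      · rintro ⟨rfl, hy⟩; exact ⟨y, hy, rfl⟩
      · rintro ⟨b, hb, heq⟩; cases heq; exact ⟨rfl, hb⟩
    rw [this, Set.ncard_image_of_injective _ (fun x y h => by simpa using congrArg Prod.snd h)]
  -- boundary size bound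
  have hbd : ∀ A : Set V, A.Finite → (ebd G A).Finite ∧ (ebd G A).ncard ≤ A.ncard * D := by
    intro A hA
    refine Set.Finite.induction_on A hA ?_ ?_
    · have : ebd G (∅ : Set V) = ∅ := by ext p; simp [ebd]
      simp [this]
    · intro a s ha hs IH
      have hsub : ebd G (insert a s) ⊆ ebd G s ∪ (({a} : Set V) ×ˢ G.neighborSet a) := by
        rintro ⟨x, y⟩ ⟨hadj, hx, hy⟩
        rcases hx with rfl | hx
        · exact Or.inr ⟨rfl, hadj⟩
        · exact Or.inl ⟨hadj, hx, fun h => hy (Set.mem_insert_of_mem _ h)⟩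
      have hfin2 : ((({a} : Set V) ×ˢ G.neighborSet a)).Finite :=
        (Set.finite_singleton a).prod (hnb a).1
      have hfin : (ebd G s ∪ ({a} : Set V) ×ˢ G.neighborSet a).Finite := IH.1.union hfin2
      refine ⟨hfin.subset hsub, ?_⟩
      calc (ebd G (insert a s)).ncard ≤ (ebd G s ∪ ({a} : Set V) ×ˢ G.neighborSet a).ncard :=
            Set.ncard_le_ncard hsub hfin
        _ ≤ (ebd G s).ncard + (({a} : Set V) ×ˢ G.neighborSet a).ncard := Set.ncard_union_le _ _
        _ ≤ s.ncard * D + D := by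
            have := (hnb a).2
            have h2 := hprodcard a (G.neighborSet a)
            omega
        _ = (insert a s).ncard * D := by
            rw [Set.ncard_insert_of_notMem ha hs]; ring
  -- attainment of the isoperimetric profile
  have hattain : ∀ k : ℕ, 1 ≤ k → ∃ F : Set V, F.Finite ∧ F.Nonempty ∧ F.ncard ≤ k ∧
      ratio G F = isop G k := by
    intro k hk
    obtain ⟨v⟩ := hNV
    set S := {x | ∃ A : Set V, A.Finite ∧ A.Nonempty ∧ A.ncard ≤ k ∧ x = ratio G A} with hS
    have hSne : S.Nonempty :=
      ⟨ratio G {v}, {v}, Set.finite_singleton v, Set.singleton_nonempty v, by simpa using hk, rfl⟩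
    have hSfin : S.Finite := by
      have hsub : S ⊆ (fun p : ℕ × ℕ => (p.1 : ℝ) / (p.2 : ℝ)) ''
          (Set.Iic (k * D) ×ˢ Set.Iic k) := by
        rintro x ⟨A, hA, hne, hcard, rfl⟩
        exact ⟨((ebd G A).ncard, A.ncard),
          ⟨(hbd A hA).2.trans (Nat.mul_le_mul_right D hcard), hcard⟩, rfl⟩
      exact (((Set.finite_Iic _).prod (Set.finite_Iic _)).image _).subset hsub
    have hmem : sInf S ∈ S := hSne.csInf_mem hSfin
    obtain ⟨F, hF1, hF2, hF3, hF4⟩ := hmem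
    exact ⟨F, hF1, hF2, hF3, hF4.symm⟩
  -- cheeger is nonnegative and at most D
  have hch_nonneg : ∀ F : Set V, 0 ≤ cheeger G F := by
    intro F
    refine Real.sInf_nonneg ?_
    rintro x ⟨A, -, -, -, rfl⟩
    positivity
  have hchD : ∀ F : Set V, F.Finite → cheeger G F ≤ (D : ℝ) := by
    intro F hF
    by_cases hne : {x | ∃ A : Set V, A ⊆ F ∧ A.Nonempty ∧ 2 * A.ncard ≤ F.ncard ∧
        x = ((inbd G F A).ncard : ℝ) / (A.ncard : ℝ)}.Nonempty
    · obtain ⟨x, A₀, hA₀F, hA₀ne, hA₀c, -⟩ := hne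
      have hA₀fin : A₀.Finite := hF.subset hA₀F
      have h1 : 1 ≤ A₀.ncard := Nat.one_le_iff_ne_zero.2 fun h =>
        hA₀ne.ne_empty ((Set.ncard_eq_zero hA₀fin).1 h)
      have hF2 : 2 ≤ F.ncard := by omega
      obtain ⟨v, hv⟩ := hA₀ne
      have hvF : v ∈ F := hA₀F hv
      have hle : cheeger G F ≤ ((inbd G F {v}).ncard : ℝ) / (({v} : Set V).ncard : ℝ) := by
        refine csInf_le ⟨0, ?_⟩ ⟨{v}, Set.singleton_subset_iff.2 hvF, Set.singleton_nonempty v,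
          by simpa using hF2, rfl⟩
        rintro x ⟨A, -, -, -, rfl⟩
        positivity
      refine hle.trans ?_
      have hsub : inbd G F {v} ⊆ ebd G {v} := by
        rintro ⟨x, y⟩ ⟨hadj, hx, hy⟩
        exact ⟨hadj, hx, hy.2⟩
      have hfin : (ebd G {v}).Finite :=
        (hebd {v} (Set.finite_singleton v) (Set.singleton_nonempty v)).1
      have hcard : (inbd G F {v}).ncard ≤ D := by
        refine (Set.ncard_le_ncard hsub hfin).trans ?_
        rw [ebd_singleton, Set.ncard_image_of_injective _
          (fun x y h => by simpa using congrArg Prod.snd h)]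
        exact (hnb v).2
      simp only [Set.ncard_singleton, Nat.cast_one, div_one]
      exact_mod_cast hcard
    · rw [cheeger, Set.not_nonempty_iff_eq_empty.1 hne, Real.sInf_empty]
      positivity
  -- sep lower bound via membership
  have hsep : ∀ (N : ℕ) (F : Set V), F.Finite → F.ncard ≤ N →
      (F.ncard : ℝ) * cheeger G F ≤ sep G N := by
    intro N F hF hcard
    refine le_csSup ⟨(N : ℝ) * D, ?_⟩ ⟨F, hF, hcard, rfl⟩
    rintro x ⟨F', hF', hc', rfl⟩
    have h1 : (F'.ncard : ℝ) ≤ N := by exact_mod_cast hc'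
    have := hchD F' hF'
    have := hch_nonneg F'
    nlinarith [Nat.cast_nonneg (α := ℝ) F'.ncard, Nat.cast_nonneg (α := ℝ) N]
  -- main construction
  set γ := α / β with hγdef
  have hγ : 0 < γ := div_pos hα hβ
  set B := (2 * C₂ / C₁) ^ (1 / β) / Real.log 2 with hBdef
  have hB : 0 < B := div_pos (Real.rpow_pos_of_pos (by positivity) _) hlog2
  refine ⟨1 / (4 * (B + 2)), by positivity, ?_⟩
  intro N₀
  set n := max N₀ 3 with hndef
  have hn3 : 3 ≤ n := le_max_right _ _
  have hn2 : 2 ≤ n := by omega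
  have hnN₀ : N₀ ≤ n := le_max_left _ _
  set x := Real.log n with hxdef
  have hx1 : (1:ℝ) ≤ x := by
    rw [hxdef, Real.le_log_iff_exp_le (by positivity)]
    calc Real.exp 1 ≤ 2.7182818286 := Real.exp_one_lt_d9.le
      _ ≤ (3:ℝ) := by norm_num
      _ ≤ (n:ℝ) := by exact_mod_cast hn3
  have hx0 : (0:ℝ) < x := lt_of_lt_of_le one_pos hx1
  set t := ⌈B * x ^ γ⌉₊ + 1 with htdef
  have ht1 : 1 ≤ t := Nat.le_add_left 1 _
  have htB : B * x ^ γ ≤ (t:ℝ) := by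
    have := Nat.le_ceil (B * x ^ γ)
    push_cast [htdef]
    linarith
  have htR : (t:ℝ) ≤ B * x ^ γ + 2 := by
    have := Nat.ceil_lt_add_one (show (0:ℝ) ≤ B * x ^ γ by positivity)
    push_cast [htdef]
    linarith
  have htpos : (0:ℝ) < t := by positivity
  -- the profile halves between n and 2^t n
  have hdrop : isop G (2 ^ t * n) ≤ isop G n / 2 := by
    have h2tn : 2 ≤ 2 ^ t * n := le_trans hn2 (Nat.le_mul_of_pos_left n (Nat.pow_pos two_pos))
    have hlogeq : Real.log ((2 ^ t * n : ℕ) : ℝ) = (t:ℝ) * Real.log 2 + x := by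
      push_cast
      rw [Real.log_mul (by positivity) (by positivity), Real.log_pow]
    have h1 : (2 * C₂ / C₁) ^ (1 / β) * x ^ γ ≤ Real.log ((2 ^ t * n : ℕ) : ℝ) := by
      rw [hlogeq]
      have h2 : (B * x ^ γ) * Real.log 2 ≤ (t:ℝ) * Real.log 2 :=
        mul_le_mul_of_nonneg_right htB hlog2.le
      have h3 : B * Real.log 2 = (2 * C₂ / C₁) ^ (1 / β) := by
        rw [hBdef, div_mul_cancel₀ _ hlog2.ne']
      nlinarith [Real.rpow_pos_of_pos hx0 γ]
    have hkey : 2 * C₂ / C₁ * x ^ α ≤ (Real.log ((2 ^ t * n : ℕ) : ℝ)) ^ β := by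
      have h4 := Real.rpow_le_rpow (by positivity) h1 hβ.le
      rw [Real.mul_rpow (by positivity) (by positivity)] at h4
      calc 2 * C₂ / C₁ * x ^ α
          = ((2 * C₂ / C₁) ^ (1/β)) ^ β * (x ^ γ) ^ β := by
            rw [← Real.rpow_mul (by positivity), one_div, inv_mul_cancel₀ hβ.ne',
              Real.rpow_one, ← Real.rpow_mul hx0.le, hγdef, div_mul_cancel₀ _ hβ.ne']
        _ ≤ (Real.log ((2 ^ t * n : ℕ) : ℝ)) ^ β := h4
    have hx2 : 0 < 2 * C₂ / C₁ * x ^ α := by positivity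
    calc isop G (2 ^ t * n) ≤ C₂ / (Real.log ((2 ^ t * n : ℕ) : ℝ)) ^ β := (hiso _ h2tn).2
      _ ≤ C₂ / (2 * C₂ / C₁ * x ^ α) := by
          exact div_le_div_of_nonneg_left hC₂.le hx2 hkey
      _ = C₁ / x ^ α / 2 := by
          field_simp
      _ ≤ isop G n / 2 := by
          have := (hiso n hn2).1
          linarith
  -- pigeonhole along the doubling chain
  have hpig : ∃ i < t, isop G n / (2 * t) ≤ isop G (2 ^ i * n) - isop G (2 ^ (i + 1) * n) := by
    by_contra hcon
    push_neg at hcon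
    have hsum : ∑ i ∈ Finset.range t,
        (isop G (2 ^ i * n) - isop G (2 ^ (i + 1) * n)) = isop G (2 ^ 0 * n) - isop G (2 ^ t * n) :=
      Finset.sum_range_sub' (fun i => isop G (2 ^ i * n)) t
    have hlt : ∑ i ∈ Finset.range t, (isop G (2 ^ i * n) - isop G (2 ^ (i + 1) * n)) <
        ∑ _i ∈ Finset.range t, isop G n / (2 * t) := by
      refine Finset.sum_lt_sum_of_nonempty ⟨0, Finset.mem_range.2 ht1⟩ ?_
      intro i hi
      exact hcon i (Finset.mem_range.1 hi)
    rw [hsum, Finset.sum_const, Finset.card_range, nsmul_eq_mul] at hlt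
    have : (t:ℝ) * (isop G n / (2 * t)) = isop G n / 2 := by
      field_simp
    rw [this, pow_zero, one_mul] at hlt
    linarith
  obtain ⟨i, hit, hdiff⟩ := hpig
  set n₁ := 2 ^ i * n with hn₁def
  have hn₁n : n ≤ n₁ := Nat.le_mul_of_pos_left n (Nat.pow_pos two_pos)
  have h2n₁ : 2 ^ (i + 1) * n = 2 * n₁ := by rw [hn₁def]; ring
  rw [h2n₁] at hdiff
  have hn₁1 : 1 ≤ n₁ := le_trans (by omega) hn₁n
  -- attain the profile at 2 n₁
  obtain ⟨F, hFfin, hFne, hFle, hFratio⟩ := hattain (2 * n₁) (by omega)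
  set N := F.ncard with hNdef
  have hN1 : 1 ≤ N := Nat.one_le_iff_ne_zero.2 fun h =>
    hFne.ne_empty ((Set.ncard_eq_zero hFfin).1 h)
  have hΛN : isop G N = isop G (2 * n₁) := by
    refine le_antisymm ?_ (isop_anti G hN1 hFle)
    calc isop G N ≤ ratio G F := isop_le G hFfin hFne le_rfl
      _ = isop G (2 * n₁) := hFratio
  have hisopn_pos : 0 < isop G n := hisop_pos n hn2
  have hNn₁ : n₁ < N := by
    by_contra h
    push_neg at h
    have h2 : isop G n₁ ≤ isop G N := isop_anti G hN1 h
    rw [hΛN] at h2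
    have h3 : 0 < isop G n / (2 * t) := by positivity
    linarith
  have hNn : n ≤ N := le_trans hn₁n hNn₁.le
  have hN2 : 2 ≤ N := by omega
  have hNR : (0:ℝ) < (N:ℝ) := by positivity
  -- the boundary of F in real terms
  have hE0 : ((ebd G F).ncard : ℝ) = isop G N * (N:ℝ) := by
    have h1 : ratio G F = isop G N := by rw [hFratio, hΛN]
    rw [ratio] at h1
    rw [div_eq_iff (Nat.cast_ne_zero.2 (by omega)), ← hNdef] at h1
    linarith [h1]
  -- key cheeger estimate for the optimal set F
  have hcheegF : (isop G n₁ - isop G N) / 2 ≤ cheeger G F := by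
    refine le_csInf ?_ ?_
    · obtain ⟨v, hv⟩ := hFne
      exact ⟨_, {v}, Set.singleton_subset_iff.2 hv, Set.singleton_nonempty v,
        by simpa using hN2, rfl⟩
    rintro y ⟨A, hAF, hAne, hAcard, rfl⟩
    have hAfin : A.Finite := hFfin.subset hAF
    have ha1 : 1 ≤ A.ncard := Nat.one_le_iff_ne_zero.2 fun h =>
      hAne.ne_empty ((Set.ncard_eq_zero hAfin).1 h)
    have han₁ : A.ncard ≤ n₁ := by omega
    have haN : A.ncard < N := by omega
    have hFAcard : (F \ A).ncard = N - A.ncard := by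
      rw [Set.ncard_diff hAF hAfin]
    have hFAne : (F \ A).Nonempty := by
      rw [← Set.ncard_pos hFfin.diff, hFAcard]; omega
    -- the four pieces
    set I := inbd G F A with hIdef
    set J1 := {p : V × V | G.Adj p.1 p.2 ∧ p.1 ∈ A ∧ p.2 ∉ F} with hJ1def
    set J2 := {p : V × V | G.Adj p.1 p.2 ∧ p.1 ∈ F \ A ∧ p.2 ∉ F} with hJ2def
    set I' := {p : V × V | G.Adj p.1 p.2 ∧ p.1 ∈ F \ A ∧ p.2 ∈ A} with hI'def
    have hE1 : ebd G A = I ∪ J1 := by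
      ext ⟨u, w⟩
      simp only [ebd, inbd, hIdef, hJ1def, Set.mem_setOf_eq, Set.mem_union, Set.mem_diff]
      constructor
      · rintro ⟨hadj, hu, hw⟩
        by_cases h : w ∈ F
        · exact Or.inl ⟨hadj, hu, h, hw⟩
        · exact Or.inr ⟨hadj, hu, h⟩
      · rintro (⟨hadj, hu, -, hw⟩ | ⟨hadj, hu, hw⟩)
        · exact ⟨hadj, hu, hw⟩
        · exact ⟨hadj, hu, fun h => hw (hAF h)⟩
    have hE2 : ebd G (F \ A) = I' ∪ J2 := by
      ext ⟨u, w⟩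
      simp only [ebd, hI'def, hJ2def, Set.mem_setOf_eq, Set.mem_union, Set.mem_diff]
      constructor
      · rintro ⟨hadj, hu, hw⟩
        by_cases h : w ∈ F
        · refine Or.inl ⟨hadj, hu, ?_⟩
          by_contra hwA
          exact hw ⟨h, hwA⟩
        · exact Or.inr ⟨hadj, hu, h⟩
      · rintro (⟨hadj, hu, hw⟩ | ⟨hadj, hu, hw⟩)
        · exact ⟨hadj, hu, fun h => h.2 hw⟩
        · exact ⟨hadj, hu, fun h => hw h.1⟩
    have hE0' : ebd G F = J1 ∪ J2 := by
      ext ⟨u, w⟩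
      simp only [ebd, hJ1def, hJ2def, Set.mem_setOf_eq, Set.mem_union, Set.mem_diff]
      constructor
      · rintro ⟨hadj, hu, hw⟩
        by_cases h : u ∈ A
        · exact Or.inl ⟨hadj, h, hw⟩
        · exact Or.inr ⟨hadj, ⟨hu, h⟩, hw⟩
      · rintro (⟨hadj, hu, hw⟩ | ⟨hadj, hu, hw⟩)
        · exact ⟨hadj, hAF hu, hw⟩
        · exact ⟨hadj, hu.1, hw⟩
    -- finiteness of all the pieces
    have hfinE1 := (hebd A hAfin hAne).1
    have hfinE2 := (hebd (F \ A) hFfin.diff hFAne).1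
    have hfinE0 := (hebd F hFfin hFne).1
    have hIfin : I.Finite := hfinE1.subset (by rw [hE1]; exact Set.subset_union_left)
    have hJ1fin : J1.Finite := hfinE1.subset (by rw [hE1]; exact Set.subset_union_right)
    have hI'fin : I'.Finite := hfinE2.subset (by rw [hE2]; exact Set.subset_union_left)
    have hJ2fin : J2.Finite := hfinE2.subset (by rw [hE2]; exact Set.subset_union_right)
    -- I' is the swap of I
    have hI'card : I'.ncard = I.ncard := by
      have hswap : I' = Prod.swap '' I := by
        ext ⟨u, w⟩
        constructor
        · rintro ⟨hadj, hu, hw⟩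
          exact ⟨(w, u), ⟨hadj.symm, hw, hu⟩, rfl⟩
        · rintro ⟨⟨p, q⟩, ⟨hadj, hp, hq⟩, heq⟩
          cases heq
          exact ⟨hadj.symm, hq, hp⟩
      rw [hswap, Set.ncard_image_of_injective _ Prod.swap_injective]
    -- disjointness
    have hd1 : Disjoint I J1 := by
      rw [Set.disjoint_left]
      rintro ⟨u, w⟩ ⟨-, -, hw⟩ ⟨-, -, hw'⟩
      exact hw' hw.1
    have hd2 : Disjoint I' J2 := by
      rw [Set.disjoint_left]
      rintro ⟨u, w⟩ ⟨-, -, hw⟩ ⟨-, -, hw'⟩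
      exact hw' (hAF hw)
    have hd0 : Disjoint J1 J2 := by
      rw [Set.disjoint_left]
      rintro ⟨u, w⟩ ⟨-, hu, -⟩ ⟨-, hu', -⟩
      exact hu'.2 hu
    -- cardinality identities
    have c1 : (ebd G A).ncard = I.ncard + J1.ncard := by
      rw [hE1, Set.ncard_union_eq hd1 hIfin hJ1fin]
    have c2 : (ebd G (F \ A)).ncard = I.ncard + J2.ncard := by
      rw [hE2, Set.ncard_union_eq hd2 hI'fin hJ2fin, hI'card]
    have c0 : (ebd G F).ncard = J1.ncard + J2.ncard := by
      rw [hE0', Set.ncard_union_eq hd0 hJ1fin hJ2fin]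
    -- real inequalities
    have haR : (0:ℝ) < (A.ncard : ℝ) := by exact_mod_cast ha1
    have r1 : isop G n₁ * (A.ncard : ℝ) ≤ ((ebd G A).ncard : ℝ) := by
      have h1 : isop G n₁ ≤ isop G A.ncard := isop_anti G ha1 han₁
      have h2 : isop G A.ncard ≤ ratio G A := isop_le G hAfin hAne le_rfl
      rw [ratio] at h2
      have := h1.trans h2
      rw [le_div_iff₀ haR] at this
      linarith
    have hFA1 : 1 ≤ (F \ A).ncard := by omega
    have r2 : isop G N * ((N:ℝ) - (A.ncard : ℝ)) ≤ ((ebd G (F \ A)).ncard : ℝ) := by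
      have h1 : isop G N ≤ isop G (F \ A).ncard :=
        isop_anti G hFA1 (by omega)
      have h2 : isop G (F \ A).ncard ≤ ratio G (F \ A) :=
        isop_le G hFfin.diff hFAne le_rfl
      have hpos : (0:ℝ) < ((F \ A).ncard : ℝ) := by exact_mod_cast hFA1
      have := h1.trans h2
      rw [ratio, le_div_iff₀ hpos] at this
      have hcast : ((F \ A).ncard : ℝ) = (N:ℝ) - (A.ncard : ℝ) := by
        rw [hFAcard, Nat.cast_sub haN.le]
      rw [hcast] at this
      linarith
    -- combine
    have csum : ((ebd G A).ncard : ℝ) + ((ebd G (F \ A)).ncard : ℝ) =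
        2 * (I.ncard : ℝ) + ((ebd G F).ncard : ℝ) := by
      push_cast [c1, c2, c0]
      ring
    rw [le_div_iff₀ haR]
    linarith [hE0, r1, r2, csum]
  -- assemble the estimate
  have hsepN : cheeger G F ≤ sep G N / (N : ℝ) := by
    have h1 := hsep N F hFfin le_rfl
    rw [← hNdef] at h1
    rw [le_div_iff₀ hNR]
    linarith [h1]
  have h4tpos : (0:ℝ) < 4 * (t:ℝ) := by linarith [htpos]
  have hchain : isop G N / (4 * (t:ℝ)) ≤ sep G N / (N : ℝ) := by
    refine le_trans ?_ (le_trans hcheegF hsepN)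
    have h1 : isop G n / (2 * (t:ℝ)) ≤ isop G n₁ - isop G N := by rw [hΛN]; exact hdiff
    have h2 : isop G N ≤ isop G n := isop_anti G (by omega) hNn
    calc isop G N / (4 * (t:ℝ)) ≤ isop G n / (4 * (t:ℝ)) :=
          (div_le_div_iff_of_pos_right h4tpos).2 h2
      _ = (isop G n / (2 * (t:ℝ))) / 2 := by
          rw [div_div]
          congr 1
          ring
      _ ≤ (isop G n₁ - isop G N) / 2 := by linarith
  refine ⟨N, le_trans hnN₀ hNn, ?_⟩
  -- final comparison of constants
  have hlogN : x ≤ Real.log N := by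
    rw [hxdef]
    exact Real.log_le_log (by positivity) (by exact_mod_cast hNn)
  have hLγ1 : x ^ γ ≤ (Real.log N) ^ γ := Real.rpow_le_rpow hx0.le hlogN hγ.le
  have hLγ2 : (1:ℝ) ≤ x ^ γ := by
    calc (1:ℝ) = x ^ (0:ℝ) := (Real.rpow_zero x).symm
      _ ≤ x ^ γ := Real.rpow_le_rpow_of_exponent_le hx1 hγ.le
  have hLγpos : (0:ℝ) < (Real.log N) ^ γ := lt_of_lt_of_le one_pos (hLγ2.trans hLγ1)
  have h4t : 4 * (t:ℝ) ≤ 4 * (B + 2) * (Real.log N) ^ γ := by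
    have h1 : B * x ^ γ ≤ B * (Real.log N) ^ γ := mul_le_mul_of_nonneg_left hLγ1 hB.le
    have h2 : (2:ℝ) ≤ 2 * (Real.log N) ^ γ := by linarith [hLγ2.trans hLγ1]
    linarith
  have hfin : 1 / (4 * (B + 2)) * isop G N / (Real.log N) ^ γ ≤ isop G N / (4 * (t:ℝ)) := by
    have hΛ0 : 0 ≤ isop G N := isop_nonneg G N
    have h5 : isop G N * (4 * (t:ℝ)) ≤ isop G N * (4 * (B + 2) * (Real.log N) ^ γ) :=
      mul_le_mul_of_nonneg_left h4t hΛ0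
    rw [div_le_div_iff₀ hLγpos h4tpos]
    calc 1 / (4 * (B + 2)) * isop G N * (4 * (t:ℝ))
        ≤ 1 / (4 * (B + 2)) * (isop G N * (4 * (B + 2) * (Real.log N) ^ γ)) := by
          rw [mul_assoc]
          exact mul_le_mul_of_nonneg_left h5 (by positivity)
      _ = isop G N * (Real.log N) ^ γ := by field_simp
  exact le_trans hfin hchain
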